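/- Let Γ be an additive commutative group and Z : Γ → ℂ an additive group homomorphism. Fix θ ∈ ℝ and α ∈ [0, π/2), and let S = S(θ,α) = {z ∈ ℂ | z ≠ 0 and Re(exp(−iθ)·z) ≥ cos(α)·|z|} be the closed sector of direction θ and half-angle α. Set Γ_S = {γ ∈ Γ | Z(γ) ∈ S}, and assume that for every λ > 0 the set {γ ∈ Γ_S | |Z(γ)| < λ} is finite. Then for every λ > 0 the set {γ ∈ M | |Z(γ)| < λ} is finite, where M is the additive submonoid of Γ generated by Γ_S. -/

import Mathlib

/-- Part (1) of Lemma 2.2: if the set of classes whose central charge lies in a closed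
sector `S` of half-angle `< π/2` has finitely many elements of central charge modulus `< λ`
for every `λ > 0`, then the same holds for the submonoid generated by those classes. -/
theorem sector_monoid_ball_finite
    {Γ : Type*} [AddCommGroup Γ] (Z : Γ →+ ℂ) (θ α : ℝ)
    (hα : α ∈ Set.Ico 0 (Real.pi / 2))
    (S : Set ℂ)
    (hS : S = {z : ℂ | z ≠ 0 ∧
      Real.cos α * ‖z‖ ≤ (Complex.exp (-(θ : ℂ) * Complex.I) * z).re})
    (ΓS : Set Γ) (hΓS : ΓS = {γ : Γ | Z γ ∈ S})
    (hfin : ∀ lam : ℝ, 0 < lam → {γ ∈ ΓS | ‖Z γ‖ < lam}.Finite) :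
    ∀ lam : ℝ, 0 < lam →
      {γ ∈ (AddSubmonoid.closure ΓS : Set Γ) | ‖Z γ‖ < lam}.Finite := by
  intro lam hlam
  have hc : 0 < Real.cos α := by
    apply Real.cos_pos_of_mem_Ioo
    constructor
    · linarith [hα.1, Real.pi_pos]
    · exact hα.2
  -- the additive "mass" functional
  set u : ℂ := Complex.exp (-(θ : ℂ) * Complex.I) with hu
  have habsu : ‖u‖ = 1 := by
    rw [hu, Complex.norm_exp]
    simp
  set φ : Γ →+ ℝ :=
    Complex.reAddGroupHom.comp ((AddMonoidHom.mulLeft u).comp Z) with hφ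
  have hφ_def : ∀ γ : Γ, φ γ = (u * Z γ).re := fun γ => rfl
  have hφ_le : ∀ γ : Γ, φ γ ≤ ‖Z γ‖ := by
    intro γ
    calc φ γ ≤ ‖u * Z γ‖ := Complex.re_le_norm _
      _ = ‖Z γ‖ := by rw [norm_mul, habsu, one_mul]
  have hφ_lb : ∀ γ ∈ ΓS, Real.cos α * ‖Z γ‖ ≤ φ γ := by
    intro γ hγ
    rw [hΓS, Set.mem_setOf_eq, hS, Set.mem_setOf_eq] at hγ
    exact hγ.2
  have hφ_pos : ∀ γ ∈ ΓS, 0 < φ γ := by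
    intro γ hγ
    refine lt_of_lt_of_le ?_ (hφ_lb γ hγ)
    have hne : Z γ ≠ 0 := by
      rw [hΓS, Set.mem_setOf_eq, hS, Set.mem_setOf_eq] at hγ
      exact hγ.1
    have : 0 < ‖Z γ‖ := norm_pos_iff.mpr hne
    positivity
  -- the finite set of possible list entries
  have hFs : {γ ∈ ΓS | ‖Z γ‖ < lam / Real.cos α}.Finite :=
    hfin _ (by positivity)
  set Fs : Set Γ := {γ ∈ ΓS | ‖Z γ‖ < lam / Real.cos α} with hFsdef
  have : Finite Fs := hFs.to_subtype
  -- lower bound for the mass of elements of Fs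
  set Ft := hFs.toFinset with hFt
  set m : ℝ := if h : Ft.Nonempty then Ft.inf' h (fun y => φ y) else 1 with hm
  have hmpos : 0 < m := by
    rw [hm]
    split_ifs with h
    · obtain ⟨y, hy, hyeq⟩ := Ft.exists_mem_eq_inf' h (fun y => φ y)
      rw [hyeq]
      have hy' := hFs.mem_toFinset.mp hy
      exact hφ_pos y hy'.1
    · exact one_pos
  set N : ℕ := ⌈lam / m⌉₊ with hN
  -- covering by sums of short lists over Fs
  have hcov : {γ ∈ (AddSubmonoid.closure ΓS : Set Γ) | ‖Z γ‖ < lam} ⊆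
      (fun l : List Fs => (l.map Subtype.val).sum) '' {l | l.length ≤ N} := by
    intro γ hγ
    obtain ⟨hγ₁, hγ₂⟩ := hγ
    obtain ⟨L, hL, hLsum⟩ := AddSubmonoid.exists_list_of_mem_closure hγ₁
    -- mass of γ
    have hsum : (L.map φ).sum = φ γ := by rw [← hLsum, ← map_list_sum]
    have hφγ : φ γ < lam := lt_of_le_of_lt (hφ_le γ) hγ₂
    have hnonneg : ∀ x ∈ L.map φ, (0:ℝ) ≤ x := by
      intro x hx
      obtain ⟨y, hy, rfl⟩ := List.mem_map.mp hx
      exact (hφ_pos y (hL y hy)).le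
    -- every entry lies in Fs
    have hmemFs : ∀ y ∈ L, y ∈ Fs := by
      intro y hy
      have h1 : φ y ≤ (L.map φ).sum :=
        List.single_le_sum hnonneg _ (List.mem_map.mpr ⟨y, hy, rfl⟩)
      have h2 : Real.cos α * ‖Z y‖ < lam := by
        calc Real.cos α * ‖Z y‖ ≤ φ y := hφ_lb y (hL y hy)
          _ ≤ (L.map φ).sum := h1
          _ = φ γ := hsum
          _ < lam := hφγ
      exact ⟨hL y hy, by rwa [lt_div_iff₀' hc]⟩
    -- length bound
    have hlen : L.length ≤ N := by
      by_cases hL0 : L = []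
      · simp [hL0]
      · obtain ⟨y₀, hy₀⟩ := List.exists_mem_of_ne_nil L hL0
        have hne : Ft.Nonempty := ⟨y₀, hFs.mem_toFinset.mpr (hmemFs y₀ hy₀)⟩
        have hmle : ∀ x ∈ L.map φ, m ≤ x := by
          intro x hx
          obtain ⟨y, hy, rfl⟩ := List.mem_map.mp hx
          rw [hm, dif_pos hne]
          exact Finset.inf'_le _ (hFs.mem_toFinset.mpr (hmemFs y hy))
        have hcard : (L.map φ).length • m ≤ (L.map φ).sum :=
          List.card_nsmul_le_sum _ _ hmle
        rw [List.length_map, hsum] at hcard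
        have : (L.length : ℝ) ≤ lam / m := by
          rw [le_div_iff₀ hmpos]
          calc (L.length : ℝ) * m = L.length • m := by rw [nsmul_eq_mul]
            _ ≤ φ γ := hcard
            _ ≤ lam := hφγ.le
        calc L.length = ⌈(L.length : ℝ)⌉₊ := by simp
          _ ≤ N := Nat.ceil_le_ceil this
    -- produce the list over Fs
    refine ⟨L.pmap (fun y hy => (⟨y, hy⟩ : Fs)) hmemFs, ?_, ?_⟩
    · simpa using hlen
    · simp only [List.map_pmap]
      rw [List.pmap_eq_map]
      simp [hLsum]
  exact Set.Finite.subset ((List.finite_length_le _ N).image _) hcov
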